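/- (Implicit regularization of SMD, over-parameterized linear case.) Let l be differentiable with l(0) = 0, let ψ be continuously differentiable and strictly convex, let W := {w : y_i = x_iᵀw for all i} be nonempty, and let the SMD iterates (with any step size η > 0 and any initialization w_0) be run on the data, cycling through or sampling the data points so that each index appears infinitely often. If the iterates converge to a limit w_∞ ∈ W, then w_∞ minimizes the Bregman divergence to the initialization over W: D_ψ(w_∞, w_0) ≤ D_ψ(w, w_0) for every w ∈ W; indeed D_ψ(w, w_0) = D_ψ(w, w_∞) + D_ψ(w_∞, w_0) for all w ∈ W. In particular, if w_0 = argmin_{w∈ℝ^m} ψ(w), then w_∞ = argmin_{w∈W} ψ(w). -/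

import Mathlib

open scoped RealInnerProductSpace

/-- Bregman-divergence-like quantity `D_g(u, u') = g(u) - g(u') - ∇g(u')ᵀ(u - u')` of a
(not necessarily convex) function `g`. -/
noncomputable def Dbreg {m : ℕ} (g : EuclideanSpace ℝ (Fin m) → ℝ)
    (u u' : EuclideanSpace ℝ (Fin m)) : ℝ :=
  g u - g u' - ⟪gradient g u', u - u'⟫

theorem grad_loss {m : ℕ} (l : ℝ → ℝ) (hl : Differentiable ℝ l) (c : ℝ)
    (a u : EuclideanSpace ℝ (Fin m)) :
    HasGradientAt (fun v => l (c - ⟪a, v⟫)) ((-(deriv l (c - ⟪a, u⟫))) • a) u := by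
  have hg : HasFDerivAt (fun v : EuclideanSpace ℝ (Fin m) => c - ⟪a, v⟫)
      (0 - (innerSL ℝ a)) u := (hasFDerivAt_const c u).sub (innerSL ℝ a).hasFDerivAt
  have h := ((hl (c - ⟪a, u⟫)).hasDerivAt).comp_hasFDerivAt u hg
  rw [hasGradientAt_iff_hasFDerivAt]
  refine h.congr_fderiv ?_
  ext v
  simp only [InnerProductSpace.toDual_apply_apply, real_inner_smul_left,
    ContinuousLinearMap.smul_apply, ContinuousLinearMap.sub_apply,
    ContinuousLinearMap.zero_apply, innerSL_apply_apply, smul_eq_mul]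
  ring

theorem Dbreg_nonneg' {m : ℕ} (ψ : EuclideanSpace ℝ (Fin m) → ℝ) (hψ : ContDiff ℝ 1 ψ)
    (hconv : ConvexOn ℝ Set.univ ψ) (u u' : EuclideanSpace ℝ (Fin m)) :
    ⟪gradient ψ u', u - u'⟫ ≤ ψ u - ψ u' := by
  set d := u - u' with hd
  have hud : u = u' + d := by rw [hd]; abel
  have hψd := hψ.differentiable one_ne_zero
  have hline : HasDerivAt (fun t : ℝ => u' + t • d) d 0 := by
    simpa using ((hasDerivAt_id (0:ℝ)).smul_const d).const_add u'
  have h1 : HasFDerivAt ψ (InnerProductSpace.toDual ℝ _ (gradient ψ u')) (u' + (0:ℝ) • d) := by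
    simpa using ((hψd u').hasGradientAt).hasFDerivAt
  have hcomp : HasDerivAt (fun t : ℝ => ψ (u' + t • d)) ⟪gradient ψ u', d⟫ 0 := by
    have h2 := h1.comp_hasDerivAt 0 hline
    simp only [InnerProductSpace.toDual_apply_apply, Function.comp_def] at h2
    exact h2
  have hφconv : ConvexOn ℝ Set.univ (fun t : ℝ => ψ (u' + t • d)) := by
    have h3 := hconv.comp_affineMap (AffineMap.lineMap u' (u' + d) : ℝ →ᵃ[ℝ] _)
    have he : (ψ ∘ ⇑(AffineMap.lineMap u' (u' + d) : ℝ →ᵃ[ℝ] _)) =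
        fun t : ℝ => ψ (u' + t • d) := by
      funext t; simp [AffineMap.lineMap_apply, Function.comp, add_comm]
    rw [he] at h3
    simpa using h3
  have h4 := hφconv.le_slope_of_hasDerivAt (Set.mem_univ 0) (Set.mem_univ 1) zero_lt_one hcomp
  rw [hud]
  simpa [slope_def_field] using h4

/-- (Proposition 1, implicit regularization of SMD in the
over-parameterized linear case: if the SMD iterates converge to an interpolating solution
`w_∞ ∈ W`, then `w_∞ = argmin_{w ∈ W} D_ψ(w, w₀)`; indeed a Pythagorean identity holds,
and if `w₀` globally minimizes `ψ` then `w_∞` minimizes `ψ` over `W`).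
The `n` data points are revisited so that each index appears infinitely often
(`idx k` is the index used at step `k`). -/
theorem stmt_15 {m n : ℕ}
    (x : Fin n → EuclideanSpace ℝ (Fin m)) (y : Fin n → ℝ)
    (l : ℝ → ℝ) (hl : Differentiable ℝ l) (hl0 : l 0 = 0)
    (ψ : EuclideanSpace ℝ (Fin m) → ℝ) (hψ : ContDiff ℝ 1 ψ)
    (hψconv : StrictConvexOn ℝ Set.univ ψ)
    (W : Set (EuclideanSpace ℝ (Fin m)))
    (hWdef : W = {u : EuclideanSpace ℝ (Fin m) | ∀ j : Fin n, y j = ⟪x j, u⟫})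
    (hWne : W.Nonempty)
    (η : ℝ) (hη : 0 < η)
    (idx : ℕ → Fin n) (hidx : ∀ j : Fin n, ∀ N : ℕ, ∃ k : ℕ, N ≤ k ∧ idx k = j)
    (w₀ : EuclideanSpace ℝ (Fin m))
    (w : ℕ → EuclideanSpace ℝ (Fin m)) (hw0 : w 0 = w₀)
    (hupd : ∀ i : ℕ,
      gradient ψ (w (i + 1)) =
        gradient ψ (w i)
          - η • gradient (fun u => l (y (idx (i + 1)) - ⟪x (idx (i + 1)), u⟫)) (w i))
    (winf : EuclideanSpace ℝ (Fin m))
    (hconv : Filter.Tendsto w Filter.atTop (nhds winf))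
    (hmem : winf ∈ W) :
    (∀ w' ∈ W, Dbreg ψ winf w₀ ≤ Dbreg ψ w' w₀) ∧
    (∀ w' ∈ W, Dbreg ψ w' w₀ = Dbreg ψ w' winf + Dbreg ψ winf w₀) ∧
    ((∀ u, ψ w₀ ≤ ψ u) → ∀ w' ∈ W, ψ winf ≤ ψ w') := by
  set S : Submodule ℝ (EuclideanSpace ℝ (Fin m)) := Submodule.span ℝ (Set.range x) with hS
  -- differences of gradients stay in S
  have hk : ∀ k : ℕ, gradient ψ (w k) - gradient ψ w₀ ∈ S := by
    intro k
    induction k with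
    | zero => rw [hw0]; simp
    | succ i ih =>
      have hstep : gradient ψ (w (i + 1)) - gradient ψ (w i) ∈ S := by
        rw [hupd i]
        have hg := (grad_loss l hl (y (idx (i+1))) (x (idx (i+1))) (w i)).gradient
        rw [hg, sub_sub_cancel_left, smul_smul]
        exact S.neg_mem (S.smul_mem _ (Submodule.subset_span ⟨idx (i+1), rfl⟩))
      have := S.add_mem hstep ih
      simpa using this
  -- continuity of gradient
  have hgc : Continuous (gradient ψ) := by
    have h1 : Continuous (fderiv ℝ ψ) := hψ.continuous_fderiv one_ne_zero
    exact (InnerProductSpace.toDual ℝ (EuclideanSpace ℝ (Fin m))).symm.continuous.comp h1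
  have hlim : gradient ψ winf - gradient ψ w₀ ∈ S := by
    have htend : Filter.Tendsto (fun k => gradient ψ (w k) - gradient ψ w₀)
        Filter.atTop (nhds (gradient ψ winf - gradient ψ w₀)) :=
      ((hgc.continuousAt.tendsto.comp hconv).sub tendsto_const_nhds)
    exact (S.closed_of_finiteDimensional).mem_of_tendsto htend
      (Filter.Eventually.of_forall hk)
  -- orthogonality
  have horth : ∀ w' ∈ W, ⟪gradient ψ winf - gradient ψ w₀, w' - winf⟫ = 0 := by
    intro w' hw'
    rw [hWdef] at hw' hmem
    have hbase : ∀ v ∈ Set.range x, ⟪v, w' - winf⟫ = 0 := by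
      rintro v ⟨j, rfl⟩
      rw [inner_sub_right, ← hw' j, ← hmem j, sub_self]
    refine Submodule.span_induction hbase (by simp) (fun a b _ _ ha hb => ?_)
      (fun r a _ ha => ?_) hlim
    · rw [inner_add_left, ha, hb, add_zero]
    · rw [real_inner_smul_left, ha, mul_zero]
  -- Pythagorean identity
  have hpyth : ∀ w' ∈ W, Dbreg ψ w' w₀ = Dbreg ψ w' winf + Dbreg ψ winf w₀ := by
    intro w' hw'
    have h0 := horth w' hw'
    simp only [Dbreg, inner_sub_left, inner_sub_right] at h0 ⊢
    linarith
  have hnn : ∀ u u', 0 ≤ Dbreg ψ u u' := by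
    intro u u'
    have := Dbreg_nonneg' ψ hψ hψconv.convexOn u u'
    simp only [Dbreg]; linarith
  refine ⟨fun w' hw' => ?_, hpyth, fun hmin w' hw' => ?_⟩
  · have := hpyth w' hw'
    have h2 := hnn w' winf
    linarith
  · -- gradient at global min is 0
    have hloc : IsLocalMin ψ w₀ := Filter.Eventually.of_forall hmin
    have hf0 : fderiv ℝ ψ w₀ = 0 := hloc.fderiv_eq_zero
    have hg0 : gradient ψ w₀ = 0 := by
      simp [gradient, hf0]
    have h1 := hpyth w' hw'
    have h2 := hnn w' winf
    simp only [Dbreg, hg0, inner_zero_left] at h1 h2 ⊢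
    linarith
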